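/- Let Γ_0, Γ_1, ..., Γ_{2n} be pairwise anticommuting Hermitian operators with Γ_j² = I on a Hilbert space, and let t_j ∈ [0,1] with ∑_{j=0}^{2n} t_j ≤ 1. Then the minimum of (1/K)∑_{j=0}^{K-1} H((1+√t_j)/2) subject to ∑ t_j ≤ 1, t_j ≥ 0 equals 1 - 1/K, attained when one t_j equals 1 and the rest are 0. -/

import Mathlib

open Real Set


/-- Binary entropy with base-2 logarithm (convention `log₂ 0 = 0`). -/
noncomputable def binEntropy2 (q : ℝ) : ℝ :=
  -q * Real.logb 2 q - (1 - q) * Real.logb 2 (1 - q)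

noncomputable def psiF (x : ℝ) : ℝ := Real.log (1 + x) - Real.log (1 - x) - 4 * Real.log 2 * x
noncomputable def FF (x : ℝ) : ℝ :=
  2 * Real.log 2 * x ^ 2 - (1 + x) * Real.log (1 + x) - (1 - x) * Real.log (1 - x)

lemma psi_hasDerivAt {x : ℝ} (h1 : -1 < x) (h2 : x < 1) :
    HasDerivAt psiF ((1 + x)⁻¹ + (1 - x)⁻¹ - 4 * Real.log 2) x := by
  have hp : (1 : ℝ) + x ≠ 0 := by linarith
  have hm : (1 : ℝ) - x ≠ 0 := by linarith
  have d1 : HasDerivAt (fun y : ℝ => Real.log (1 + y)) ((1 + x)⁻¹) x := by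
    have : HasDerivAt (fun y : ℝ => 1 + y) 1 x := (hasDerivAt_id x).const_add 1
    simpa using this.log hp
  have d2 : HasDerivAt (fun y : ℝ => Real.log (1 - y)) (-(1 - x)⁻¹) x := by
    have : HasDerivAt (fun y : ℝ => 1 - y) (-1) x := (hasDerivAt_id x).const_sub 1
    have := this.log hm
    simpa [div_eq_mul_inv] using this
  have d3 : HasDerivAt (fun y : ℝ => 4 * Real.log 2 * y) (4 * Real.log 2) x := by
    simpa using (hasDerivAt_id x).const_mul (4 * Real.log 2)
  have := (d1.sub d2).sub d3
  exact this.congr_deriv (by ring)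

lemma F_hasDerivAt {x : ℝ} (h1 : -1 < x) (h2 : x < 1) :
    HasDerivAt FF (-psiF x) x := by
  have hp : (1 : ℝ) + x ≠ 0 := by linarith
  have hm : (1 : ℝ) - x ≠ 0 := by linarith
  have d0 : HasDerivAt (fun y : ℝ => 2 * Real.log 2 * y ^ 2) (4 * Real.log 2 * x) x := by
    have := ((hasDerivAt_pow 2 x).const_mul (2 * Real.log 2))
    exact this.congr_deriv (by norm_num; ring)
  have dp : HasDerivAt (fun y : ℝ => 1 + y) 1 x := (hasDerivAt_id x).const_add 1
  have dm : HasDerivAt (fun y : ℝ => 1 - y) (-1) x := (hasDerivAt_id x).const_sub 1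
  have d1 : HasDerivAt (fun y : ℝ => (1 + y) * Real.log (1 + y))
      (Real.log (1 + x) + 1) x := by
    have := dp.mul (dp.log hp)
    refine this.congr_deriv ?_
    field_simp
  have d2 : HasDerivAt (fun y : ℝ => (1 - y) * Real.log (1 - y))
      (-Real.log (1 - x) - 1) x := by
    have := dm.mul (dm.log hm)
    refine this.congr_deriv ?_
    field_simp
    ring
  have := (d0.sub d1).sub d2
  refine this.congr_deriv ?_
  simp [psiF]; ring

lemma F_continuous : Continuous FF := by
  have h := Real.continuous_mul_log
  have c1 : Continuous fun x : ℝ => (1 + x) * Real.log (1 + x) :=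
    h.comp (continuous_const.add continuous_id)
  have c2 : Continuous fun x : ℝ => (1 - x) * Real.log (1 - x) :=
    h.comp (continuous_const.sub continuous_id)
  exact ((continuous_const.mul (continuous_pow 2)).sub c1).sub c2

lemma psi_convex : ConvexOn ℝ (Ico (0:ℝ) 1) psiF := by
  have hint : interior (Ico (0:ℝ) 1) = Ioo 0 1 := interior_Ico
  apply MonotoneOn.convexOn_of_deriv (convex_Ico 0 1)
  · intro x hx
    have h1 : (-1:ℝ) < x := by linarith [hx.1]
    have h2 : x < 1 := hx.2
    exact (psi_hasDerivAt h1 h2).continuousAt.continuousWithinAt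
  · rw [hint]
    intro x hx
    exact ((psi_hasDerivAt (by linarith [hx.1]) hx.2).differentiableAt).differentiableWithinAt
  · rw [hint]
    intro a ha b hb hab
    rw [(psi_hasDerivAt (by linarith [ha.1]) ha.2).deriv,
        (psi_hasDerivAt (by linarith [hb.1]) hb.2).deriv]
    have h1 : (0:ℝ) < 1 + a := by linarith [ha.1]
    have h2 : (0:ℝ) < 1 - a := by linarith [ha.2]
    have h3 : (0:ℝ) < 1 + b := by linarith [hb.1]
    have h4 : (0:ℝ) < 1 - b := by linarith [hb.2]
    have key : (1 + a)⁻¹ + (1 - a)⁻¹ ≤ (1 + b)⁻¹ + (1 - b)⁻¹ := by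
      rw [inv_add_inv (by positivity) (by positivity), inv_add_inv (by positivity) (by positivity)]
      have e1 : (1+a) + (1-a) = 2 := by ring
      have e2 : (1+b) + (1-b) = 2 := by ring
      rw [e1, e2]
      have hab2 : a * a ≤ b * b := mul_le_mul hab hab (le_of_lt ha.1) (le_of_lt (lt_of_lt_of_le ha.1 hab))
      apply div_le_div_of_nonneg_left (by norm_num) (by nlinarith) (by nlinarith)
    linarith

lemma F_nonneg {x : ℝ} (h0 : 0 ≤ x) (h1 : x ≤ 1) : 0 ≤ FF x := by
  have hF0 : FF 0 = 0 := by simp [FF]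
  have hF1 : FF 1 = 0 := by norm_num [FF, Real.log_zero]
  by_cases hcase : ∀ z ∈ Icc (0:ℝ) x, psiF z ≤ 0
  · -- F monotone on [0, x]
    have hmono : MonotoneOn FF (Icc 0 x) := by
      apply monotoneOn_of_deriv_nonneg (convex_Icc 0 x) F_continuous.continuousOn
      · rw [interior_Icc]
        intro z hz
        exact (F_hasDerivAt (by linarith [hz.1]) (by linarith [hz.2])).differentiableAt.differentiableWithinAt
      · rw [interior_Icc]
        intro z hz
        rw [(F_hasDerivAt (by linarith [hz.1]) (by linarith [hz.2])).deriv]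
        have := hcase z ⟨le_of_lt hz.1, le_of_lt hz.2⟩
        linarith
    have := hmono (left_mem_Icc.2 h0) (right_mem_Icc.2 h0) h0
    rw [hF0] at this; exact this
  · push_neg at hcase
    obtain ⟨y, hy, hypos⟩ := hcase
    have hpsi0 : psiF 0 = 0 := by simp [psiF]
    have hy0 : 0 < y := by
      rcases lt_or_eq_of_le hy.1 with h | h
      · exact h
      · exfalso; rw [← h, hpsi0] at hypos; exact lt_irrefl 0 hypos
    have hy1 : y < 1 := by
      rcases lt_or_eq_of_le (hy.2.trans h1) with h | h
      · exact h
      · exfalso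
        rw [h] at hypos
        have : psiF 1 = -3 * Real.log 2 := by
          simp [psiF, Real.log_zero]; ring
        rw [this] at hypos
        have := Real.log_pos (by norm_num : (1:ℝ) < 2)
        linarith
    -- psiF ≥ 0 on (y, 1)
    have hpsipos : ∀ z ∈ Ioo y 1, 0 ≤ psiF z := by
      intro z hz
      have hz0 : 0 < z := lt_trans hy0 hz.1
      have hmem0 : (0:ℝ) ∈ Ico (0:ℝ) 1 := by constructor <;> norm_num
      have hmemz : z ∈ Ico (0:ℝ) 1 := ⟨le_of_lt hz0, hz.2⟩
      have ha : (0:ℝ) ≤ 1 - y / z := by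
        have : y / z ≤ 1 := (div_le_one hz0).2 (le_of_lt hz.1)
        linarith
      have hb : (0:ℝ) ≤ y / z := by positivity
      have hcomb := psi_convex.2 hmem0 hmemz ha hb (by ring)
      have heq : (1 - y / z) • (0:ℝ) + (y / z) • z = y := by
        rw [smul_eq_mul, smul_eq_mul]
        field_simp
        ring
      rw [heq, hpsi0] at hcomb
      have : 0 < (y / z) * psiF z := by
        calc (0:ℝ) < psiF y := hypos
        _ ≤ (1 - y/z) * 0 + (y/z) * psiF z := by simpa using hcomb
        _ = (y/z) * psiF z := by ring
      nlinarith [hb]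
    -- F antitone on [y, 1]
    have hanti : AntitoneOn FF (Icc y 1) := by
      apply antitoneOn_of_deriv_nonpos (convex_Icc y 1) F_continuous.continuousOn
      · rw [interior_Icc]
        intro z hz
        exact (F_hasDerivAt (by linarith [hy0, hz.1]) hz.2).differentiableAt.differentiableWithinAt
      · rw [interior_Icc]
        intro z hz
        rw [(F_hasDerivAt (by linarith [hy0, hz.1]) hz.2).deriv]
        have := hpsipos z hz
        linarith
    have hxmem : x ∈ Icc y 1 := ⟨hy.2, h1⟩
    have h1mem : (1:ℝ) ∈ Icc y 1 := ⟨le_of_lt hy1, le_refl 1⟩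
    have := hanti hxmem h1mem h1
    rw [hF1] at this; exact this

lemma key_ineq {t : ℝ} (h0 : 0 ≤ t) (h1 : t ≤ 1) :
    1 - t ≤ binEntropy2 ((1 + Real.sqrt t) / 2) := by
  have hlog2 : 0 < Real.log 2 := Real.log_pos (by norm_num)
  set x := Real.sqrt t with hxdef
  have hx0 : 0 ≤ x := Real.sqrt_nonneg t
  have hx1 : x ≤ 1 := by
    rw [hxdef, show (1:ℝ) = Real.sqrt 1 by simp]
    exact Real.sqrt_le_sqrt h1
  have hxx : x ^ 2 = t := Real.sq_sqrt h0
  rcases eq_or_lt_of_le hx1 with heq | hlt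
  · have ht1 : t = 1 := by rw [← hxx, heq]; norm_num
    rw [ht1, heq]
    norm_num [binEntropy2]
  · have hp : (0:ℝ) < 1 + x := by linarith
    have hm : (0:ℝ) < 1 - x := by linarith
    have e1 : Real.log ((1+x)/2) = Real.log (1+x) - Real.log 2 :=
      Real.log_div (ne_of_gt hp) two_ne_zero
    have e2 : Real.log ((1-x)/2) = Real.log (1-x) - Real.log 2 :=
      Real.log_div (ne_of_gt hm) two_ne_zero
    have hF := F_nonneg hx0 hx1
    unfold FF at hF
    have hq : 1 - (1+x)/2 = (1-x)/2 := by ring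
    rw [← hxx]
    unfold binEntropy2
    rw [hq]
    simp only [Real.logb]
    rw [e1, e2]
    have goal2 : -((1+x)/2) * ((Real.log (1+x) - Real.log 2)/Real.log 2)
        - ((1-x)/2) * ((Real.log (1-x) - Real.log 2)/Real.log 2)
        = 1 - ((1+x)*Real.log (1+x) + (1-x)*Real.log (1-x))/(2*Real.log 2) := by
      field_simp
      ring
    rw [goal2]
    have hdiv : ((1+x)*Real.log (1+x) + (1-x)*Real.log (1-x))/(2*Real.log 2) ≤ x^2 := by
      rw [div_le_iff₀ (by positivity)]
      nlinarith [hF]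
    linarith

lemma binEntropy2_half : binEntropy2 (1/2) = 1 := by
  have h : Real.logb 2 (1/2 : ℝ) = -1 := by
    rw [one_div, Real.logb_inv, Real.logb_self_eq_one] <;> norm_num
  unfold binEntropy2
  rw [show (1:ℝ) - 1/2 = 1/2 by norm_num, h]
  norm_num

/-- Given `2n+1` pairwise anticommuting Hermitian operators squaring to the identity and
`K ≤ 2n+1`, the minimum of `(1/K) ∑_{j<K} H((1 + √(t j))/2)` over `t j ≥ 0` with
`∑ t j ≤ 1` equals `1 - 1/K`, attained when one `t j` is `1` and the rest are `0`. -/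
theorem stmt_3 {n d K : ℕ} (hK : 0 < K) (hKn : K ≤ 2 * n + 1)
    (Γ : Fin (2 * n + 1) → Matrix (Fin d) (Fin d) ℂ)
    (hherm : ∀ j, (Γ j).IsHermitian)
    (hanti : ∀ i j, i ≠ j → Γ i * Γ j = -(Γ j * Γ i))
    (hsq : ∀ j, Γ j * Γ j = 1) :
    IsLeast {v : ℝ | ∃ t : Fin K → ℝ, (∀ j, 0 ≤ t j) ∧ (∑ j, t j) ≤ 1 ∧
        v = (1 / K) * ∑ j, binEntropy2 ((1 + Real.sqrt (t j)) / 2)}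
      (1 - 1 / K) := by
  have hKr : (0:ℝ) < K := by exact_mod_cast hK
  constructor
  · -- membership
    refine ⟨fun j => if j = ⟨0, hK⟩ then 1 else 0, ?_, ?_, ?_⟩
    · intro j; dsimp only; split <;> norm_num
    · simp [Finset.sum_ite_eq']
    · have hsum : ∑ j : Fin K, binEntropy2 ((1 + Real.sqrt (if j = ⟨0, hK⟩ then (1:ℝ) else 0)) / 2)
          = (K : ℝ) - 1 := by
        have hpt : ∀ j : Fin K, binEntropy2 ((1 + Real.sqrt (if j = ⟨0, hK⟩ then (1:ℝ) else 0)) / 2)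
            = 1 - (if j = ⟨0, hK⟩ then (1:ℝ) else 0) := by
          intro j
          by_cases h : j = ⟨0, hK⟩
          · rw [if_pos h, Real.sqrt_one, show ((1:ℝ) + 1)/2 = 1 by norm_num]
            norm_num [binEntropy2]
          · rw [if_neg h, Real.sqrt_zero, show ((1:ℝ) + 0)/2 = 1/2 by norm_num,
              binEntropy2_half]
            norm_num
        rw [Finset.sum_congr rfl (fun j _ => hpt j), Finset.sum_sub_distrib]
        simp [Finset.sum_ite_eq', Finset.card_univ]
      simp only []
      rw [hsum]
      field_simp
  · -- lower bound
    rintro v ⟨t, ht0, hts, rfl⟩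
    have hpt : ∀ j : Fin K, 1 - t j ≤ binEntropy2 ((1 + Real.sqrt (t j)) / 2) := by
      intro j
      apply key_ineq (ht0 j)
      calc t j ≤ ∑ i, t i := Finset.single_le_sum (fun i _ => ht0 i) (Finset.mem_univ j)
        _ ≤ 1 := hts
    have hsum : (K:ℝ) - 1 ≤ ∑ j, binEntropy2 ((1 + Real.sqrt (t j)) / 2) := by
      calc (K:ℝ) - 1 ≤ (K:ℝ) - ∑ j, t j := by linarith
        _ = ∑ j : Fin K, (1 - t j) := by
            rw [Finset.sum_sub_distrib]
            simp
        _ ≤ _ := Finset.sum_le_sum (fun j _ => hpt j)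
    have h1K : (0:ℝ) < 1 / K := by positivity
    calc (1:ℝ) - 1/K = (1/K) * ((K:ℝ) - 1) := by field_simp
      _ ≤ (1/K) * ∑ j, binEntropy2 ((1 + Real.sqrt (t j)) / 2) := by
          apply mul_le_mul_of_nonneg_left hsum (le_of_lt h1K)
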